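/- With T = Γ + xO as above (p ≥ 5, e ≥ 2, x = λ^(p-2)/π), one has π·T ⊆ Γ ⊆ T, and the quotient T/Γ is isomorphic to O/πO as an O-module. -/

import Mathlib

section

variable (O : Type) [CommRing O] (Γ : Type) [CommRing Γ] [Algebra O Γ]

/-- The image of `Γ` in its total fraction ring, as an `O`-submodule. -/
noncomputable def GammaSub : Submodule O (FractionRing Γ) :=
  LinearMap.range (IsScalarTower.toAlgHom O Γ (FractionRing Γ)).toLinearMap

/-- With `T = Γ + xO` as above (`p ≥ 5`, `e ≥ 2`, i.e. `π^2 ∣ p`,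
`x = λ^(p-2)/π`), one has `π·T ⊆ Γ ⊆ T`, and the quotient `T/Γ` is isomorphic to
`O/πO` as an `O`-module. -/
theorem stmt_5 (p : ℕ) (hp : p.Prime) (hp5 : 5 ≤ p)
    [IsDomain O] [IsDiscreteValuationRing O] [CharZero O]
    [IsAdicComplete (IsLocalRing.maximalIdeal O) O]
    (π : O) (hπ : Irreducible π) (he : π ^ 2 ∣ (p : O))
    (lam : Γ) (hlam : lam ^ (p - 1) = -(p : Γ))
    (b : Module.Basis (Fin (p - 1)) O Γ) (hb : ∀ i : Fin (p - 1), b i = lam ^ (i : ℕ))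
    (hπΓ : algebraMap O Γ π ∈ nonZeroDivisors Γ)
    (x : FractionRing Γ)
    (hx : x * algebraMap Γ (FractionRing Γ) (algebraMap O Γ π)
        = algebraMap Γ (FractionRing Γ) (lam ^ (p - 2)))
    (T : Submodule O (FractionRing Γ))
    (hT : T = GammaSub O Γ ⊔ Submodule.span O {x}) :
    (∀ t ∈ T, algebraMap Γ (FractionRing Γ) (algebraMap O Γ π) * t ∈ GammaSub O Γ) ∧
    GammaSub O Γ ≤ T ∧
    Nonempty ((↥T ⧸ (Submodule.comap T.subtype (GammaSub O Γ)))
      ≃ₗ[O] (O ⧸ (Ideal.span {π} : Ideal O))) := by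
  classical
  have hsmul : ∀ (a : O) (g : Γ), a • algebraMap Γ (FractionRing Γ) g = algebraMap Γ (FractionRing Γ) (a • g) := by
    intro a g
    rw [Algebra.smul_def, Algebra.smul_def, map_mul,
      ← IsScalarTower.algebraMap_apply O Γ (FractionRing Γ)]
  have hmemG : ∀ y : FractionRing Γ, y ∈ GammaSub O Γ ↔ ∃ g : Γ, algebraMap Γ (FractionRing Γ) g = y := by
    intro y; exact ⟨fun ⟨g, hg⟩ => ⟨g, hg⟩, fun ⟨g, hg⟩ => ⟨g, hg⟩⟩
  have hfinj : Function.Injective (algebraMap Γ (FractionRing Γ)) := IsFractionRing.injective Γ (FractionRing Γ)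
  have hlt : p - 2 < p - 1 := by omega
  set i₀ : Fin (p - 1) := ⟨p - 2, hlt⟩
  have hbi : b i₀ = lam ^ (p - 2) := hb i₀
  -- part 1
  have h1 : ∀ t ∈ T, algebraMap Γ (FractionRing Γ) (algebraMap O Γ π) * t ∈ GammaSub O Γ := by
    intro t ht
    rw [hT, Submodule.mem_sup] at ht
    obtain ⟨y, hy, z, hz, rfl⟩ := ht
    obtain ⟨g, hg⟩ := (hmemG y).mp hy
    rw [Submodule.mem_span_singleton] at hz
    obtain ⟨a, rfl⟩ := hz
    refine (hmemG _).mpr ⟨algebraMap O Γ π * g + a • lam ^ (p - 2), ?_⟩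
    rw [map_add, map_mul, hg, ← hsmul, ← hx, mul_add, ← smul_mul_assoc,
      mul_comm (a • x) _]
  -- x ∈ T
  have hx_T : x ∈ T := hT ▸ Submodule.mem_sup_right (Submodule.mem_span_singleton_self x)
  set N := Submodule.comap T.subtype (GammaSub O Γ) with hN
  let φ : O →ₗ[O] (↥T ⧸ N) :=
    N.mkQ.comp (LinearMap.toSpanSingleton O (↥T) ⟨x, hx_T⟩)
  have hφ : ∀ a : O, φ a = Submodule.Quotient.mk (a • (⟨x, hx_T⟩ : ↥T)) := fun _ => rfl
  have hsurj : Function.Surjective φ := by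
    intro q
    obtain ⟨⟨t, ht⟩, rfl⟩ := Submodule.Quotient.mk_surjective _ q
    have ht' := ht
    rw [hT, Submodule.mem_sup] at ht'
    obtain ⟨y, hy, z, hz, hyz⟩ := ht'
    rw [Submodule.mem_span_singleton] at hz
    obtain ⟨a, rfl⟩ := hz
    refine ⟨a, ?_⟩
    rw [hφ, Submodule.Quotient.eq]
    show T.subtype (a • (⟨x, hx_T⟩ : ↥T) - ⟨t, ht⟩) ∈ GammaSub O Γ
    have h2 : T.subtype (a • (⟨x, hx_T⟩ : ↥T) - ⟨t, ht⟩) = a • x - t := rfl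
    rw [h2, ← hyz]
    have h3 : a • x - (y + a • x) = -y := by ring
    rw [h3]
    exact (GammaSub O Γ).neg_mem hy
  have hker : LinearMap.ker φ = Ideal.span {π} := by
    ext a
    rw [LinearMap.mem_ker, Ideal.mem_span_singleton, hφ, Submodule.Quotient.mk_eq_zero]
    have hmemN : (a • (⟨x, hx_T⟩ : ↥T) ∈ N) ↔ a • x ∈ GammaSub O Γ := Iff.rfl
    rw [hmemN]
    have hπx : π • x = x * algebraMap Γ (FractionRing Γ) (algebraMap O Γ π) := by
      rw [Algebra.smul_def, IsScalarTower.algebraMap_apply O Γ (FractionRing Γ), mul_comm]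
    constructor
    · intro h
      obtain ⟨g, hg⟩ := (hmemG _).mp h
      have key : a • lam ^ (p - 2) = π • g := by
        apply hfinj
        rw [← hsmul, ← hsmul, ← hx, hg, smul_comm π a, hπx]
      have h2 := congrArg (fun y => b.repr y i₀) key
      simp only [map_smul, Finsupp.smul_apply, smul_eq_mul] at h2
      rw [← hbi, Module.Basis.repr_self] at h2
      simp at h2
      exact ⟨b.repr g i₀, h2⟩
    · rintro ⟨c, rfl⟩
      refine (hmemG _).mpr ⟨c • lam ^ (p - 2), ?_⟩
      rw [← hsmul, ← hx, ← hπx, smul_comm c π, ← mul_smul]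
  refine ⟨h1, hT ▸ le_sup_left, ?_⟩
  exact ⟨(φ.quotKerEquivOfSurjective hsurj).symm.trans
    (Submodule.quotEquivOfEq _ _ hker)⟩

end
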